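/- Let X and Z be jointly Gaussian real random variables, each with mean zero and positive variances, with correlation coefficient ρ = Cov(X,Z)/(σ_X σ_Z). Then E[sign(X)·sign(Z)] = (2/π)·arcsin(ρ). -/

import Mathlib

open MeasureTheory ProbabilityTheory
open Real Set


lemma measurable_rsign : Measurable Real.sign := by
  unfold Real.sign
  exact (measurable_const.ite (measurableSet_lt measurable_id measurable_const)
    (measurable_const.ite (measurableSet_lt measurable_const measurable_id) measurable_const))

lemma abs_rsign_le (x : ℝ) : |Real.sign x| ≤ 1 := by
  rcases Real.sign_apply_eq x with h | h | h <;> rw [h] <;> norm_num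

lemma rsign_mul_pos {c : ℝ} (hc : 0 < c) (x : ℝ) : Real.sign (c * x) = Real.sign x := by
  rcases lt_trichotomy x 0 with h | h | h
  · rw [Real.sign_of_neg h, Real.sign_of_neg (by nlinarith)]
  · simp [h]
  · rw [Real.sign_of_pos h, Real.sign_of_pos (by nlinarith)]

lemma radial_int : ∫ r in Set.Ioi (0:ℝ), r * Real.exp (-(r^2)/2) = 1 := by
  have hd : ∀ x ∈ Set.Ici (0:ℝ), HasDerivAt (fun r : ℝ => -Real.exp (-(r^2)/2))
      (x * Real.exp (-(x^2)/2)) x := by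
    intro x _
    have h1 : HasDerivAt (fun r : ℝ => -(r^2)/2) (-x) x := by
      have := ((hasDerivAt_pow 2 x).neg).div_const 2
      exact this.congr_deriv (by norm_num; ring)
    have := (h1.exp).neg
    exact this.congr_deriv (by ring)
  have ht : Filter.Tendsto (fun r : ℝ => -Real.exp (-(r^2)/2)) Filter.atTop (nhds 0) := by
    have : Filter.Tendsto (fun r : ℝ => Real.exp (-(r^2)/2)) Filter.atTop (nhds 0) := by
      apply Real.tendsto_exp_atBot.comp
      apply Filter.Tendsto.atBot_div_const (by norm_num)
      exact Filter.tendsto_neg_atBot_iff.mpr (Filter.tendsto_pow_atTop (by norm_num))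
    simpa using this.neg
  have h := integral_Ioi_of_hasDerivAt_of_nonneg' hd
    (fun x hx => mul_nonneg hx.out.le (Real.exp_nonneg _)) ht
  rw [h]; simp

lemma piece_const {f : ℝ → ℝ} {a b c : ℝ} (hab : a ≤ b) (h : ∀ x ∈ Set.Ioo a b, f x = c) :
    ∫ x in a..b, f x = (b - a) * c := by
  rw [intervalIntegral.integral_of_le hab, MeasureTheory.integral_Ioc_eq_integral_Ioo,
    setIntegral_congr_fun measurableSet_Ioo h, setIntegral_const, Real.volume_real_Ioo_of_le hab]
  simp [smul_eq_mul]

lemma angular {α : ℝ} (h0 : 0 ≤ α) (h1 : α ≤ π/2) :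
    ∫ θ in Set.Ioo (-π) π, Real.sign (Real.cos θ) * Real.sign (Real.cos (θ - α))
      = 2*π - 4*α := by
  have hπ := Real.pi_pos
  set g : ℝ → ℝ := fun θ => Real.sign (Real.cos θ) * Real.sign (Real.cos (θ - α)) with hg
  have gmeas : Measurable g := (measurable_rsign.comp Real.measurable_cos).mul
    (measurable_rsign.comp (Real.measurable_cos.comp (measurable_id.sub measurable_const)))
  have gbd : ∀ θ, ‖g θ‖ ≤ 1 := by
    intro θ
    rw [Real.norm_eq_abs, hg]
    calc |Real.sign (Real.cos θ) * Real.sign (Real.cos (θ - α))|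
        = |Real.sign (Real.cos θ)| * |Real.sign (Real.cos (θ - α))| := abs_mul _ _
      _ ≤ 1 := mul_le_one₀ (abs_rsign_le _) (abs_nonneg _) (abs_rsign_le _)
  have gI : ∀ a b : ℝ, IntervalIntegrable g volume a b := by
    intro a b
    rw [intervalIntegrable_iff]
    haveI : IsFiniteMeasure (volume.restrict (Set.uIoc a b)) :=
      ⟨by rw [Measure.restrict_apply_univ]; exact measure_Ioc_lt_top⟩
    exact (integrable_const 1).mono' gmeas.aestronglyMeasurable.restrict (ae_of_all _ gbd)
  have key : ∫ θ in Set.Ioo (-π) π, g θ = ∫ θ in (-π)..π, g θ := by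
    rw [intervalIntegral.integral_of_le (by linarith), MeasureTheory.integral_Ioc_eq_integral_Ioo]
  rw [key]
  have h12 : ∫ θ in (-π)..(-π/2), g θ = (-π/2 - (-π)) * 1 := by
    apply piece_const (by linarith)
    intro θ hθ
    have hc1 : Real.cos θ < 0 := by
      rw [← Real.cos_neg]
      exact Real.cos_neg_of_pi_div_two_lt_of_lt (by linarith [hθ.2]) (by linarith [hθ.1])
    have hc2 : Real.cos (θ - α) < 0 := by
      rw [← Real.cos_neg, neg_sub]
      exact Real.cos_neg_of_pi_div_two_lt_of_lt (by linarith [hθ.2]) (by linarith [hθ.1])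
    rw [hg]; simp only [Real.sign_of_neg hc1, Real.sign_of_neg hc2]; ring
  have h23 : ∫ θ in (-π/2)..(α-π/2), g θ = (α - π/2 - (-π/2)) * (-1) := by
    apply piece_const (by linarith)
    intro θ hθ
    have hc1 : 0 < Real.cos θ := Real.cos_pos_of_mem_Ioo ⟨by linarith [hθ.1], by linarith [hθ.2]⟩
    have hc2 : Real.cos (θ - α) < 0 := by
      rw [← Real.cos_neg, neg_sub]
      exact Real.cos_neg_of_pi_div_two_lt_of_lt (by linarith [hθ.2]) (by linarith [hθ.1])
    rw [hg]; simp only [Real.sign_of_pos hc1, Real.sign_of_neg hc2]; ring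
  have h34 : ∫ θ in (α-π/2)..(π/2), g θ = (π/2 - (α - π/2)) * 1 := by
    apply piece_const (by linarith)
    intro θ hθ
    have hc1 : 0 < Real.cos θ := Real.cos_pos_of_mem_Ioo ⟨by linarith [hθ.1], by linarith [hθ.2]⟩
    have hc2 : 0 < Real.cos (θ - α) :=
      Real.cos_pos_of_mem_Ioo ⟨by linarith [hθ.1], by linarith [hθ.2]⟩
    rw [hg]; simp only [Real.sign_of_pos hc1, Real.sign_of_pos hc2]; ring
  have h45 : ∫ θ in (π/2)..(α+π/2), g θ = (α + π/2 - π/2) * (-1) := by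
    apply piece_const (by linarith)
    intro θ hθ
    have hc1 : Real.cos θ < 0 :=
      Real.cos_neg_of_pi_div_two_lt_of_lt (by linarith [hθ.1]) (by linarith [hθ.2])
    have hc2 : 0 < Real.cos (θ - α) :=
      Real.cos_pos_of_mem_Ioo ⟨by linarith [hθ.1], by linarith [hθ.2]⟩
    rw [hg]; simp only [Real.sign_of_neg hc1, Real.sign_of_pos hc2]; ring
  have h56 : ∫ θ in (α+π/2)..π, g θ = (π - (α + π/2)) * 1 := by
    apply piece_const (by linarith)
    intro θ hθ
    have hc1 : Real.cos θ < 0 :=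
      Real.cos_neg_of_pi_div_two_lt_of_lt (by linarith [hθ.1]) (by linarith [hθ.2])
    have hc2 : Real.cos (θ - α) < 0 :=
      Real.cos_neg_of_pi_div_two_lt_of_lt (by linarith [hθ.1]) (by linarith [hθ.2])
    rw [hg]; simp only [Real.sign_of_neg hc1, Real.sign_of_neg hc2]; ring
  have s1 : ∫ θ in (-π)..π, g θ =
      (∫ θ in (-π)..(-π/2), g θ) + (∫ θ in (-π/2)..(α-π/2), g θ) + (∫ θ in (α-π/2)..(π/2), g θ)
      + (∫ θ in (π/2)..(α+π/2), g θ) + (∫ θ in (α+π/2)..π, g θ) := by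
    rw [intervalIntegral.integral_add_adjacent_intervals (gI _ _) (gI _ _),
      intervalIntegral.integral_add_adjacent_intervals (gI _ _) (gI _ _),
      intervalIntegral.integral_add_adjacent_intervals (gI _ _) (gI _ _),
      intervalIntegral.integral_add_adjacent_intervals (gI _ _) (gI _ _)]
  rw [s1, h12, h23, h34, h45, h56]
  ring

lemma integral_gaussian_density (g : ℝ → ℝ) :
    ∫ x, g x ∂(gaussianReal 0 1) = ∫ x, gaussianPDFReal 0 1 x * g x := by
  rw [gaussianReal_of_var_ne_zero 0 one_ne_zero]
  have h : (gaussianPDF 0 1) = fun x => ((gaussianPDFReal 0 1 x).toNNReal : ENNReal) := by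
    funext x; rfl
  rw [h, integral_withDensity_eq_integral_smul (measurable_gaussianPDFReal 0 1).real_toNNReal g]
  congr 1; funext x
  rw [NNReal.smul_def, smul_eq_mul, Real.coe_toNNReal _ (gaussianPDFReal_nonneg 0 1 x)]

lemma pdf_prod_eq (x y : ℝ) : gaussianPDFReal 0 1 x * gaussianPDFReal 0 1 y
    = (2 * π)⁻¹ * Real.exp (-(x^2 + y^2)/2) := by
  simp only [gaussianPDFReal, NNReal.coe_one, mul_one, sub_zero]
  have h2 : (√(2 * π))⁻¹ * (√(2 * π))⁻¹ = (2 * π)⁻¹ := by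
    rw [← mul_inv, Real.mul_self_sqrt (by positivity : (0:ℝ) ≤ 2 * π)]
  have h3 : rexp (-x ^ 2 / 2) * rexp (-y ^ 2 / 2) = rexp (-(x^2 + y^2)/2) := by
    rw [← Real.exp_add]; ring_nf
  calc (√(2 * π))⁻¹ * rexp (-x ^ 2 / 2) * ((√(2 * π))⁻¹ * rexp (-y ^ 2 / 2))
      = ((√(2 * π))⁻¹ * (√(2 * π))⁻¹) * (rexp (-x ^ 2 / 2) * rexp (-y ^ 2 / 2)) := by ring
    _ = (2 * π)⁻¹ * rexp (-(x^2 + y^2)/2) := by rw [h2, h3]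

lemma core {ρ : ℝ} (h0 : 0 ≤ ρ) (h1 : ρ ≤ 1) :
    ∫ p : ℝ × ℝ, Real.sign p.1 * Real.sign (ρ * p.1 + Real.sqrt (1 - ρ^2) * p.2)
      ∂((gaussianReal 0 1).prod (gaussianReal 0 1)) = (2 / π) * Real.arcsin ρ := by
  have hπ := Real.pi_pos
  set c : ℝ := Real.sqrt (1 - ρ^2) with hc
  set α : ℝ := Real.arccos ρ with hα
  have hα0 : 0 ≤ α := Real.arccos_nonneg ρ
  have hα2 : α ≤ π/2 := Real.arccos_le_pi_div_two.mpr h0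
  have hcos : Real.cos α = ρ := Real.cos_arccos (by linarith) h1
  have hsin : Real.sin α = c := Real.sin_arccos ρ
  set f : ℝ × ℝ → ℝ := fun p => Real.sign p.1 * Real.sign (ρ * p.1 + c * p.2) with hf
  have fmeas : Measurable f := (measurable_rsign.comp measurable_fst).mul
    (measurable_rsign.comp ((measurable_fst.const_mul ρ).add (measurable_snd.const_mul c)))
  have fbd : ∀ p, ‖f p‖ ≤ 1 := by
    intro p
    rw [Real.norm_eq_abs, hf]
    calc |Real.sign p.1 * Real.sign (ρ * p.1 + c * p.2)|
        = |Real.sign p.1| * |Real.sign (ρ * p.1 + c * p.2)| := abs_mul _ _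
      _ ≤ 1 := mul_le_one₀ (abs_rsign_le _) (abs_nonneg _) (abs_rsign_le _)
  have fint : Integrable f ((gaussianReal 0 1).prod (gaussianReal 0 1)) :=
    (integrable_const 1).mono' fmeas.aestronglyMeasurable (ae_of_all _ fbd)
  rw [integral_prod f fint]
  have step2 : ∀ x : ℝ, ∫ y, f (x, y) ∂(gaussianReal 0 1)
      = ∫ y, gaussianPDFReal 0 1 y * f (x, y) := fun x => integral_gaussian_density _
  simp_rw [step2]
  rw [integral_gaussian_density]
  simp_rw [← integral_const_mul]
  set F : ℝ × ℝ → ℝ := fun p =>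
    (gaussianPDFReal 0 1 p.1 * gaussianPDFReal 0 1 p.2) * f p with hF
  have Fint : Integrable F (volume.prod volume) := by
    apply ((integrable_gaussianPDFReal 0 1).mul_prod (integrable_gaussianPDFReal 0 1)).mono'
    · exact (((measurable_gaussianPDFReal 0 1).comp measurable_fst).mul
        ((measurable_gaussianPDFReal 0 1).comp measurable_snd)).mul fmeas
        |>.aestronglyMeasurable
    · refine ae_of_all _ fun p => ?_
      rw [hF, Real.norm_eq_abs, abs_mul]
      have h1 : |gaussianPDFReal 0 1 p.1 * gaussianPDFReal 0 1 p.2|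
          = gaussianPDFReal 0 1 p.1 * gaussianPDFReal 0 1 p.2 :=
        abs_of_nonneg (mul_nonneg (gaussianPDFReal_nonneg _ _ _) (gaussianPDFReal_nonneg _ _ _))
      rw [h1]
      exact mul_le_of_le_one_right (mul_nonneg (gaussianPDFReal_nonneg _ _ _)
        (gaussianPDFReal_nonneg _ _ _)) (by simpa [Real.norm_eq_abs] using fbd p)
  have step3 : ∫ x : ℝ, ∫ y : ℝ, gaussianPDFReal 0 1 x * (gaussianPDFReal 0 1 y * f (x, y))
      = ∫ p, F p := by
    have he : ∀ x y : ℝ, gaussianPDFReal 0 1 x * (gaussianPDFReal 0 1 y * f (x, y))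
        = F (x, y) := by intro x y; rw [hF]; ring
    simp_rw [he]
    rw [MeasureTheory.Measure.volume_eq_prod, MeasureTheory.integral_prod _ Fint]
  rw [step3, ← integral_comp_polarCoord_symm F]
  have htarget : polarCoord.target = Set.Ioi (0:ℝ) ×ˢ Set.Ioo (-π) π := rfl
  rw [htarget]
  have hcongr : Set.EqOn (fun p : ℝ × ℝ => p.1 • F (polarCoord.symm p))
      (fun p : ℝ × ℝ => (p.1 * Real.exp (-(p.1^2)/2)) *
        ((2*π)⁻¹ * (Real.sign (Real.cos p.2) * Real.sign (Real.cos (p.2 - α)))))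
      (Set.Ioi (0:ℝ) ×ˢ Set.Ioo (-π) π) := by
    rintro ⟨r, θ⟩ hp
    have hr : (0:ℝ) < r := hp.1
    have hsymm : polarCoord.symm (r, θ) = (r * Real.cos θ, r * Real.sin θ) := rfl
    simp only
    rw [hsymm, hF, hf]
    simp only
    rw [pdf_prod_eq]
    have hsq : (r * Real.cos θ)^2 + (r * Real.sin θ)^2 = r^2 := by
      have := Real.sin_sq_add_cos_sq θ; nlinarith
    rw [hsq]
    have e1 : Real.sign (r * Real.cos θ) = Real.sign (Real.cos θ) := rsign_mul_pos hr _
    have e2 : ρ * (r * Real.cos θ) + c * (r * Real.sin θ) = r * (Real.cos (θ - α)) := by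
      rw [Real.cos_sub, hcos, hsin]; ring
    rw [e1, e2, rsign_mul_pos hr, smul_eq_mul]
    ring
  rw [setIntegral_congr_fun (measurableSet_Ioi.prod measurableSet_Ioo) hcongr,
    MeasureTheory.Measure.volume_eq_prod,
    setIntegral_prod_mul (fun r : ℝ => r * Real.exp (-(r^2)/2))
      (fun θ : ℝ => (2*π)⁻¹ * (Real.sign (Real.cos θ) * Real.sign (Real.cos (θ - α)))),
    radial_int, MeasureTheory.integral_const_mul, angular hα0 hα2]
  have harcsin : Real.arcsin ρ = π/2 - α := by
    rw [hα, Real.arccos_eq_pi_div_two_sub_arcsin]; ring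
  rw [harcsin]
  field_simp
  ring

lemma gauss_map_neg : Measure.map (fun x : ℝ => -x) (gaussianReal 0 1) = gaussianReal 0 1 := by
  have h := gaussianReal_map_const_mul (μ := 0) (v := 1) (-1)
  have he : (fun x : ℝ => -1 * x) = fun x : ℝ => -x := by funext x; ring
  rw [he] at h
  simpa using h

lemma core' {ρ : ℝ} (hm : -1 ≤ ρ) (h1 : ρ ≤ 1) :
    ∫ p : ℝ × ℝ, Real.sign p.1 * Real.sign (ρ * p.1 + Real.sqrt (1 - ρ^2) * p.2)
      ∂((gaussianReal 0 1).prod (gaussianReal 0 1)) = (2 / π) * Real.arcsin ρ := by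
  rcases le_or_gt 0 ρ with h0 | h0
  · exact core h0 h1
  · set G := gaussianReal 0 1 with hG
    have hmapT : Measure.map (Prod.map (id : ℝ → ℝ) (fun x : ℝ => -x)) (G.prod G)
        = G.prod G := by
      rw [← Measure.map_prod_map _ _ measurable_id measurable_neg, Measure.map_id]
      rw [hG, gauss_map_neg]
    set c : ℝ := Real.sqrt (1 - ρ^2) with hc
    have fmeas : Measurable (fun p : ℝ × ℝ => Real.sign p.1 * Real.sign (ρ * p.1 + c * p.2)) :=
      (measurable_rsign.comp measurable_fst).mul
        (measurable_rsign.comp ((measurable_fst.const_mul ρ).add (measurable_snd.const_mul c)))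
    have step : ∫ p : ℝ × ℝ, Real.sign p.1 * Real.sign (ρ * p.1 + c * p.2) ∂(G.prod G)
        = ∫ p : ℝ × ℝ, Real.sign p.1 * Real.sign (ρ * p.1 + c * (-p.2)) ∂(G.prod G) := by
      conv_lhs => rw [← hmapT]
      rw [integral_map (measurable_id.prodMap measurable_neg).aemeasurable
        fmeas.aestronglyMeasurable]
      rfl
    rw [step]
    have hneg : ∀ p : ℝ × ℝ, Real.sign p.1 * Real.sign (ρ * p.1 + c * (-p.2))
        = -(Real.sign p.1 * Real.sign ((-ρ) * p.1 + c * p.2)) := by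
      intro p
      have : ρ * p.1 + c * (-p.2) = -((-ρ) * p.1 + c * p.2) := by ring
      rw [this, Real.sign_neg]
      ring
    simp_rw [hneg]
    rw [integral_neg]
    have hc' : c = Real.sqrt (1 - (-ρ)^2) := by rw [hc]; ring_nf
    rw [hc', core (by linarith) (by linarith), Real.arcsin_neg]
    ring

/-- Grothendieck's identity: if `(X, Z)` is a centered bivariate Gaussian vector with
positive variances `σX²`, `σZ²` and correlation `ρ` (encoded via the standard
representation `X = σX W₁`, `Z = σZ (ρ W₁ + √(1-ρ²) W₂)` for independent standard
Gaussians `W₁, W₂`), then `E[sign X · sign Z] = (2/π) arcsin ρ`. -/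
theorem stmt1 {Ω : Type*} [MeasurableSpace Ω] (μ : Measure Ω) [IsProbabilityMeasure μ]
    (W₁ W₂ : Ω → ℝ) (hW₁ : Measure.map W₁ μ = gaussianReal 0 1)
    (hW₂ : Measure.map W₂ μ = gaussianReal 0 1)
    (hind : IndepFun W₁ W₂ μ)
    (σX σZ ρ : ℝ) (hσX : 0 < σX) (hσZ : 0 < σZ) (hρ : ρ ∈ Set.Icc (-1 : ℝ) 1)
    (X Z : Ω → ℝ)
    (hX : ∀ ω, X ω = σX * W₁ ω)
    (hZ : ∀ ω, Z ω = σZ * (ρ * W₁ ω + Real.sqrt (1 - ρ ^ 2) * W₂ ω)) :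
    ∫ ω, Real.sign (X ω) * Real.sign (Z ω) ∂μ = (2 / Real.pi) * Real.arcsin ρ := by
  set c : ℝ := Real.sqrt (1 - ρ^2) with hc
  have hae₁ : AEMeasurable W₁ μ := by
    haveI : NeZero (Measure.map W₁ μ) := by rw [hW₁]; infer_instance
    exact aemeasurable_of_map_neZero this
  have hae₂ : AEMeasurable W₂ μ := by
    haveI : NeZero (Measure.map W₂ μ) := by rw [hW₂]; infer_instance
    exact aemeasurable_of_map_neZero this
  have hmap : Measure.map (fun ω => (W₁ ω, W₂ ω)) μ
      = (gaussianReal 0 1).prod (gaussianReal 0 1) := by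
    rw [(indepFun_iff_map_prod_eq_prod_map_map hae₁ hae₂).mp hind, hW₁, hW₂]
  have fmeas : Measurable (fun p : ℝ × ℝ => Real.sign p.1 * Real.sign (ρ * p.1 + c * p.2)) :=
    (measurable_rsign.comp measurable_fst).mul
      (measurable_rsign.comp ((measurable_fst.const_mul ρ).add (measurable_snd.const_mul c)))
  have hpt : ∀ ω, Real.sign (X ω) * Real.sign (Z ω)
      = Real.sign (W₁ ω) * Real.sign (ρ * W₁ ω + c * W₂ ω) := by
    intro ω
    rw [hX ω, hZ ω, rsign_mul_pos hσX, rsign_mul_pos hσZ]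
  simp_rw [hpt]
  have := integral_map (μ := μ) (φ := fun ω => (W₁ ω, W₂ ω)) (hae₁.prodMk hae₂)
    fmeas.aestronglyMeasurable
  rw [hmap] at this
  rw [← this]
  exact core' hρ.1 hρ.2
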